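/- Let a discrete group Γ act by homeomorphisms on a compact metric space Z, and let Ω ⊆ Z be an open Γ-invariant subset. Then the action of Γ on Ω is properly discontinuous (i.e., for every compact K ⊆ Ω the set {γ ∈ Γ : K ∩ γK ≠ ∅} is finite) if and only if no two points of Ω are dynamically related, where ξ is dynamically related to ξ′ if there exist ξ_n → ξ in Z and γ_n → ∞ in Γ with γ_n·ξ_n → ξ′. -/

import Mathlib

open Filter Topology Pointwise

/-- The action on an open invariant subset `Ω` is properly discontinuous iff
no two points of `Ω` are dynamically related. -/
theorem stmt_4 {Γ Z : Type*} [Group Γ] [MetricSpace Z] [CompactSpace Z] [MulAction Γ Z]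
    (hcont : ∀ γ : Γ, Continuous fun z : Z => γ • z)
    (Ω : Set Z) (hΩ : IsOpen Ω) (hinv : ∀ (γ : Γ), ∀ z ∈ Ω, γ • z ∈ Ω) :
    (∀ K ⊆ Ω, IsCompact K → {γ : Γ | (K ∩ γ • K).Nonempty}.Finite) ↔
      ∀ ξ ∈ Ω, ∀ ξ' ∈ Ω, ¬ ∃ (ξn : ℕ → Z) (γn : ℕ → Γ),
        Tendsto ξn atTop (𝓝 ξ) ∧
        (∀ F : Finset Γ, ∀ᶠ n in atTop, γn n ∉ F) ∧
        Tendsto (fun n => γn n • ξn n) atTop (𝓝 ξ') := by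
  constructor
  · rintro hpd ξ hξ ξ' hξ' ⟨ξn, γn, h1, h2, h3⟩
    obtain ⟨r, hr, hrΩ⟩ : ∃ r > 0, Metric.closedBall ξ r ⊆ Ω := by
      obtain ⟨r, hr, h⟩ := Metric.isOpen_iff.1 hΩ ξ hξ
      exact ⟨r/2, by positivity, (Metric.closedBall_subset_ball (by linarith)).trans h⟩
    obtain ⟨r', hr', hrΩ'⟩ : ∃ r > 0, Metric.closedBall ξ' r ⊆ Ω := by
      obtain ⟨r, hr, h⟩ := Metric.isOpen_iff.1 hΩ ξ' hξ'
      exact ⟨r/2, by positivity, (Metric.closedBall_subset_ball (by linarith)).trans h⟩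
    set K := Metric.closedBall ξ r ∪ Metric.closedBall ξ' r' with hK
    have hKc : IsCompact K :=
      (Metric.isClosed_closedBall.union Metric.isClosed_closedBall).isCompact
    have hKΩ : K ⊆ Ω := Set.union_subset hrΩ hrΩ'
    have hS := hpd K hKΩ hKc
    have e1 : ∀ᶠ n in atTop, ξn n ∈ K := by
      filter_upwards [h1 (Metric.closedBall_mem_nhds ξ hr)] with n hn
      exact Set.mem_union_left _ hn
    have e2 : ∀ᶠ n in atTop, γn n • ξn n ∈ K := by
      filter_upwards [h3 (Metric.closedBall_mem_nhds ξ' hr')] with n hn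
      exact Set.mem_union_right _ hn
    have e3 := h2 hS.toFinset
    obtain ⟨n, hn1, hn2, hn3⟩ := (e1.and (e2.and e3)).exists
    exact hn3 (hS.mem_toFinset.2 ⟨γn n • ξn n, hn2, Set.smul_mem_smul_set hn1⟩)
  · intro hnd K hKΩ hKc
    by_contra hinf
    have hinf2 : {γ : Γ | (K ∩ γ • K).Nonempty}.Infinite := hinf
    set e := hinf2.natEmbedding with he
    set γ : ℕ → Γ := fun n => (e n : Γ) with hγ
    have hγinj : Function.Injective γ := fun a b h => e.injective (Subtype.ext h)
    have hγS : ∀ n, (K ∩ γ n • K).Nonempty := fun n => (e n).2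
    choose y hy using hγS
    have hx : ∀ n, ∃ x ∈ K, γ n • x = y n := by
      intro n
      obtain ⟨x, hxK, hxe⟩ := (hy n).2
      exact ⟨x, hxK, hxe⟩
    choose x hxK hxy using hx
    obtain ⟨ξ, hξK, φ, hφ, hφt⟩ := hKc.tendsto_subseq hxK
    obtain ⟨ξ', hξ'K, ψ, hψ, hψt⟩ := hKc.tendsto_subseq (fun n => (hy (φ n)).1)
    refine hnd ξ (hKΩ hξK) ξ' (hKΩ hξ'K)
      ⟨fun n => x (φ (ψ n)), fun n => γ (φ (ψ n)), ?_, ?_, ?_⟩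
    · exact hφt.comp hψ.tendsto_atTop
    · intro F
      have hfin : {n : ℕ | γ (φ (ψ n)) ∈ (F : Set Γ)}.Finite := by
        have : Function.Injective fun n => γ (φ (ψ n)) :=
          hγinj.comp (hφ.injective.comp hψ.injective)
        exact F.finite_toSet.preimage this.injOn
      have := hfin.eventually_cofinite_notMem
      rwa [Nat.cofinite_eq_atTop] at this
    · have : (fun n => γ (φ (ψ n)) • x (φ (ψ n))) = fun n => y (φ (ψ n)) := by
        funext n; exact hxy _
      rw [this]
      exact hψt
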